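/- Let G be a subgroup of finite index in a group J, let L be a synchronous combing of G over X with constant K, and let T be a set of left coset representatives of G in J. Then the language LT = {wt : w ∈ L, t ∈ T} is a language for J over X ∪ T satisfying the right synchronous fellow traveller condition: any u, u' ∈ LT with u' =_J uy for y ∈ X ∪ T ∪ {e} synchronously fellow travel at a bounded distance. -/

import Mathlib

/-- The group element represented by a word. -/
def evalW {X G : Type*} [Group G] (π : X → G) (w : List X) : G := (w.map π).prod

/-- The group element represented by the length-`t` prefix of a word. -/
def evalP {X G : Type*} [Group G] (π : X → G) (w : List X) (t : ℕ) : G :=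
  ((w.take t).map π).prod

/-- `g` and `h` are at word-metric distance at most `K` (w.r.t. the generators `π x`). -/
def WDistLE {X G : Type*} [Group G] (π : X → G) (K : ℕ) (g h : G) : Prop :=
  ∃ l : List X, l.length ≤ K ∧ g * (l.map π).prod = h

/-- `v` and `w` synchronously `K`-fellow travel. -/
def SyncFT {X G : Type*} [Group G] (π : X → G) (K : ℕ) (v w : List X) : Prop :=
  ∀ t : ℕ, WDistLE π K (evalP π v t) (evalP π w t)

/-- `v` and `w` asynchronously `K`-fellow travel, via a monotone reparametrization
mapping `[0, |v|]` onto `[0, |w|]`. -/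
def AsyncFT {X G : Type*} [Group G] (π : X → G) (K : ℕ) (v w : List X) : Prop :=
  ∃ h : ℕ → ℕ, Monotone h ∧ h 0 = 0 ∧ h v.length = w.length ∧
    ∀ t : ℕ, WDistLE π K (evalP π v t) (evalP π w (h t))

/-- The generating set is inverse-closed. -/
def InvClosed {X G : Type*} [Group G] (π : X → G) : Prop :=
  ∀ x, ∃ x', π x' = (π x)⁻¹

/-- `L` is a language for `G`: it contains a representative of every element. -/
def IsLanguageFor {X G : Type*} [Group G] (π : X → G) (L : Set (List X)) : Prop :=
  ∀ g : G, ∃ w ∈ L, evalW π w = g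

/-- `L` contains exactly one representative of every element. -/
def IsBijectiveLang {X G : Type*} [Group G] (π : X → G) (L : Set (List X)) : Prop :=
  ∀ g : G, ∃! w, w ∈ L ∧ evalW π w = g

/-- The pairs of words for which a combing requires fellow travelling:
`w` represents `v`, or `v` times a generator. -/
def CombRel {X G : Type*} [Group G] (π : X → G) (v w : List X) : Prop :=
  evalW π w = evalW π v ∨ ∃ x, evalW π w = evalW π v * π x

/-- `L` is a synchronous combing with fellow traveller constant `K`. -/
def IsSyncCombing {X G : Type*} [Group G] (π : X → G) (L : Set (List X)) (K : ℕ) : Prop :=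
  IsLanguageFor π L ∧ ∀ v ∈ L, ∀ w ∈ L, CombRel π v w → SyncFT π K v w

/-- `L` is an asynchronous combing with fellow traveller constant `K`. -/
def IsAsyncCombing {X G : Type*} [Group G] (π : X → G) (L : Set (List X)) (K : ℕ) : Prop :=
  IsLanguageFor π L ∧ ∀ v ∈ L, ∀ w ∈ L, CombRel π v w → AsyncFT π K v w

section Helpers

variable {X G : Type*} [Group G] (π : X → G)

lemma wdistLE_mono {K K' : ℕ} (h : K ≤ K') {g h' : G} :
    WDistLE π K g h' → WDistLE π K' g h' := fun ⟨l, hl, he⟩ => ⟨l, hl.trans h, he⟩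

lemma wdistLE_trans {K1 K2 : ℕ} {a b c : G} (h1 : WDistLE π K1 a b)
    (h2 : WDistLE π K2 b c) : WDistLE π (K1 + K2) a c := by
  obtain ⟨l1, hl1, he1⟩ := h1
  obtain ⟨l2, hl2, he2⟩ := h2
  exact ⟨l1 ++ l2, by simpa using Nat.add_le_add hl1 hl2,
    by simp [List.map_append, List.prod_append, ← mul_assoc, he1, he2]⟩

lemma syncFT_mono {K K' : ℕ} (h : K ≤ K') {v w : List X} :
    SyncFT π K v w → SyncFT π K' v w := fun hs t => wdistLE_mono π h (hs t)

lemma syncFT_trans {K1 K2 : ℕ} {a b c : List X} (h1 : SyncFT π K1 a b)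
    (h2 : SyncFT π K2 b c) : SyncFT π (K1 + K2) a c :=
  fun t => wdistLE_trans π (h1 t) (h2 t)

lemma chainLemma {L : Set (List X)} {K : ℕ} (hL : IsSyncCombing π L K) :
    ∀ l : List X, ∀ w ∈ L, ∀ w' ∈ L,
      evalW π w' = evalW π w * (l.map π).prod →
      SyncFT π ((l.length + 1) * K) w w' := by
  intro l
  induction l with
  | nil =>
      intro w hw w' hw' he
      simpa using hL.2 w hw w' hw' (Or.inl (by simpa using he))
  | cons x l ih =>
      intro w hw w' hw' he
      obtain ⟨w1, hw1, he1⟩ := hL.1 (evalW π w * π x)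
      have h1 : SyncFT π K w w1 := hL.2 w hw w1 hw1 (Or.inr ⟨x, he1⟩)
      have h2 : SyncFT π ((l.length + 1) * K) w1 w' := by
        apply ih w1 hw1 w' hw'
        rw [he1, he]
        simp [mul_assoc]
      have h3 := syncFT_trans π h1 h2
      have harith : ((x :: l).length + 1) * K = K + (l.length + 1) * K := by
        simp [List.length_cons]; ring
      rw [harith]
      exact h3

variable {T J : Type*} [Group J] {G' : Subgroup J}

lemma coe_prod (π : X → G') (l : List X) :
    (l.map fun x => ((π x : J))).prod = (((l.map π).prod : G') : J) := by
  induction l with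
  | nil => simp
  | cons x l ih => simp [ih]

lemma prod_map_inl (π : X → G') (τ : T → J) (l : List X) :
    ((l.map Sum.inl).map (Sum.elim (fun x => ((π x : J))) τ)).prod
      = (((l.map π).prod : G') : J) := by
  rw [List.map_map]
  induction l with
  | nil => simp
  | cons x l ih => simp_all

lemma evalP_map_inl (π : X → G') (τ : T → J) (w : List X) (s : ℕ) :
    evalP (Sum.elim (fun x => ((π x : J))) τ) (w.map Sum.inl) s
      = ((evalP π w s : G') : J) := by
  unfold evalP
  rw [← List.map_take]
  exact prod_map_inl π τ (w.take s)

lemma evalW_LT (π : X → G') (τ : T → J) (w : List X) (t : T) :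
    evalW (Sum.elim (fun x => ((π x : J))) τ) (w.map Sum.inl ++ [Sum.inr t])
      = ((evalW π w : G') : J) * τ t := by
  unfold evalW
  rw [List.map_append, List.prod_append, prod_map_inl]
  simp

lemma evalP_append_le {Y : Type*} (σ : Y → J) (a b : List Y) (s : ℕ) (h : s ≤ a.length) :
    evalP σ (a ++ b) s = evalP σ a s := by
  unfold evalP
  rw [List.take_append_of_le_length h]

lemma evalP_of_le {Y : Type*} (σ : Y → J) (u : List Y) (s : ℕ) (h : u.length ≤ s) :
    evalP σ u s = evalW σ u := by
  unfold evalP evalW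
  rw [List.take_of_length_le h]

lemma evalP_eq_evalW_of_le (w : List X) (s : ℕ) (h : w.length ≤ s) :
    evalP π w s = evalW π w := by
  unfold evalP evalW
  rw [List.take_of_length_le h]

end Helpers

/-- if `G` is of finite index in `J`, `L` is a synchronous combing of `G`
with constant `K`, and `T` is a set of left coset representatives, then `LT` is a
language for `J` over `X ∪ T` satisfying the right synchronous fellow traveller
condition. -/
theorem stmt6 {X T J : Type*} [Group J] [Fintype X] [Fintype T] (G : Subgroup J)
    [G.FiniteIndex] (π : X → G) (hinv : InvClosed π) (τ : T → J)
    (hT : ∀ j : J, ∃! t : T, j * (τ t)⁻¹ ∈ G)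
    (L : Set (List X)) (K : ℕ) (hL : IsSyncCombing π L K) :
    IsLanguageFor (Sum.elim (fun x => (π x : J)) τ)
      {u : List (X ⊕ T) | ∃ w ∈ L, ∃ t : T, u = w.map Sum.inl ++ [Sum.inr t]} ∧
    ∃ K' : ℕ, ∀ u ∈ {u : List (X ⊕ T) | ∃ w ∈ L, ∃ t : T, u = w.map Sum.inl ++ [Sum.inr t]},
      ∀ u' ∈ {u : List (X ⊕ T) | ∃ w ∈ L, ∃ t : T, u = w.map Sum.inl ++ [Sum.inr t]},
        CombRel (Sum.elim (fun x => (π x : J)) τ) u u' →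
          SyncFT (Sum.elim (fun x => (π x : J)) τ) K' u u' := by
  classical
  set σ : X ⊕ T → J := Sum.elim (fun x => ((π x : J))) τ with hσ
  constructor
  · -- language part
    intro j
    obtain ⟨t, ht, -⟩ := hT j
    obtain ⟨w, hw, hew⟩ := hL.1 ⟨j * (τ t)⁻¹, ht⟩
    refine ⟨w.map Sum.inl ++ [Sum.inr t], ⟨w, hw, t, rfl⟩, ?_⟩
    rw [hσ, evalW_LT, hew]
    simp
  · -- fellow traveller part
    -- words over X ⊕ T representing (τ t)⁻¹
    have hinvT : ∀ t : T, ∃ m : List (X ⊕ T), (m.map σ).prod = (τ t)⁻¹ := by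
      intro t
      obtain ⟨t', ht', -⟩ := hT (τ t)⁻¹
      obtain ⟨w, hw, hew⟩ := hL.1 ⟨(τ t)⁻¹ * (τ t')⁻¹, ht'⟩
      refine ⟨w.map Sum.inl ++ [Sum.inr t'], ?_⟩
      have : ((w.map Sum.inl ++ [Sum.inr t']).map σ).prod
          = evalW σ (w.map Sum.inl ++ [Sum.inr t']) := rfl
      rw [this, hσ, evalW_LT, hew]
      simp [mul_assoc]
    choose invW hinvW using hinvT
    set M2 := Finset.univ.sup fun t => (invW t).length with hM2
    -- words over X for the connecting group elements
    have hg : ∀ p : T × T × Option (X ⊕ T), ∃ l : List X,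
        ∀ _ : τ p.1 * (p.2.2.elim 1 σ) * (τ p.2.1)⁻¹ ∈ G,
          (((l.map π).prod : G) : J) = τ p.1 * (p.2.2.elim 1 σ) * (τ p.2.1)⁻¹ := by
      intro p
      by_cases h : τ p.1 * (p.2.2.elim 1 σ) * (τ p.2.1)⁻¹ ∈ G
      · obtain ⟨w, hw, hew⟩ := hL.1 ⟨_, h⟩
        refine ⟨w, fun _ => ?_⟩
        have : (w.map π).prod = evalW π w := rfl
        rw [this, hew]
      · exact ⟨[], fun hc => absurd hc h⟩
    choose gW hgW using hg
    set M := Finset.univ.sup fun p : T × T × Option (X ⊕ T) => (gW p).length with hM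
    refine ⟨(M + 1) * K + M2 + 1, ?_⟩
    rintro u ⟨w, hw, t, rfl⟩ u' ⟨w', hw', t', rfl⟩ hrel
    -- extract the multiplier
    have hy0 : ∃ y : Option (X ⊕ T),
        evalW σ (w'.map Sum.inl ++ [Sum.inr t'])
          = evalW σ (w.map Sum.inl ++ [Sum.inr t]) * (y.elim 1 σ) := by
      rcases hrel with h | ⟨x, h⟩
      · exact ⟨none, by simpa using h⟩
      · exact ⟨some x, by simpa using h⟩
    obtain ⟨y, hy⟩ := hy0
    rw [hσ, evalW_LT, evalW_LT] at hy
    set p : T × T × Option (X ⊕ T) := (t, t', y) with hp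
    have h3 : ((evalW π w' : G) : J)
        = ((evalW π w : G) : J) * τ t * Option.elim y 1 σ * (τ t')⁻¹ := by
      rw [← hy]; group
    have hmem : τ t * Option.elim y 1 σ * (τ t')⁻¹ ∈ G := by
      have heq : τ t * Option.elim y 1 σ * (τ t')⁻¹
          = ((evalW π w : G) : J)⁻¹ * ((evalW π w' : G) : J) := by
        rw [h3]; group
      rw [heq]
      exact G.mul_mem (G.inv_mem (SetLike.coe_mem _)) (SetLike.coe_mem _)
    have hgw := hgW p hmem
    have hcomb : evalW π w' = evalW π w * ((gW p).map π).prod := by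
      apply Subtype.coe_injective
      show ((evalW π w' : G) : J) = ((evalW π w * ((gW p).map π).prod : G) : J)
      rw [Subgroup.coe_mul, hgw, h3]; group; rfl
    have hsync : SyncFT π (((gW p).length + 1) * K) w w' :=
      chainLemma π hL (gW p) w hw w' hw' hcomb
    have hlenp : (gW p).length ≤ M :=
      Finset.le_sup (f := fun p : T × T × Option (X ⊕ T) => (gW p).length)
        (Finset.mem_univ p)
    have hsyncM : SyncFT π ((M + 1) * K) w w' :=
      syncFT_mono π (Nat.mul_le_mul_right K (Nat.add_le_add_right hlenp 1)) hsync
    intro s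
    by_cases h1 : s ≤ w.length <;> by_cases h2 : s ≤ w'.length
    · -- both inside
      rw [hσ, evalP_append_le _ _ _ _ (by simpa), evalP_append_le _ _ _ _ (by simpa),
        evalP_map_inl, evalP_map_inl]
      obtain ⟨l, hl, he⟩ := hsyncM s
      refine ⟨l.map Sum.inl, by simpa using hl.trans (by omega), ?_⟩
      rw [prod_map_inl, ← Subgroup.coe_mul, he]
    · -- u inside, u' finished
      rw [hσ, evalP_append_le _ _ _ _ (by simpa), evalP_map_inl,
        evalP_of_le σ (w'.map Sum.inl ++ [Sum.inr t']) s (by simp; omega), hσ, evalW_LT]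
      obtain ⟨l, hl, he⟩ := hsyncM s
      have hfull : evalP π w' s = evalW π w' := evalP_eq_evalW_of_le π w' s (by omega)
      refine ⟨l.map Sum.inl ++ [Sum.inr t'], by simp; omega, ?_⟩
      rw [List.map_append, List.prod_append, prod_map_inl, ← mul_assoc,
        ← Subgroup.coe_mul, he, hfull]
      simp
    · -- u finished, u' inside
      rw [hσ, evalP_of_le σ (w.map Sum.inl ++ [Sum.inr t]) s (by simp; omega), hσ, evalW_LT,
        evalP_append_le _ _ _ _ (by simpa), evalP_map_inl]
      obtain ⟨l, hl, he⟩ := hsyncM s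
      have hfull : evalP π w s = evalW π w := evalP_eq_evalW_of_le π w s (by omega)
      have hlen2 : (invW t).length ≤ M2 :=
        Finset.le_sup (f := fun t => (invW t).length) (Finset.mem_univ t)
      refine ⟨invW t ++ l.map Sum.inl, by simp; omega, ?_⟩
      rw [List.map_append, List.prod_append, prod_map_inl, hinvW]
      rw [← he, hfull]
      push_cast
      group
    · -- both finished
      rw [hσ, evalP_of_le σ (w.map Sum.inl ++ [Sum.inr t]) s (by simp; omega),
        evalP_of_le σ (w'.map Sum.inl ++ [Sum.inr t']) s (by simp; omega), hσ, evalW_LT, evalW_LT]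
      refine ⟨y.toList, by cases y <;> simp, ?_⟩
      cases y <;> simp_all
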